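/- arXiv:2103.15243 — 4 statements merged into one kernel-verified Lean document; each statement's English description precedes it below -/
import Mathlib

section
/- Lower semicontinuity of integral functionals with convex integrands under weak derivative convergence: let l : ℝ^d → ℝ be convex and continuous, and let v_k → v weakly in L²([0,T], ℝ^d) with v_k bounded in L². Then ∫_0^T l(v(t)) dt ≤ liminf_{k→∞} ∫_0^T l(v_k(t)) dt, provided l is bounded below by an affine function. -/
open MeasureTheory Filter Set Topology

/-- Existence of a subgradient for a convex continuous function on a Euclidean space. -/
lemma exists_subgradient_aux {d : ℕ} (l : EuclideanSpace ℝ (Fin d) → ℝ)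
    (hconv : ConvexOn ℝ Set.univ l) (hcont : Continuous l) (x : EuclideanSpace ℝ (Fin d)) :
    ∃ p : EuclideanSpace ℝ (Fin d), ∀ w, l x + (inner ℝ p (w - x) : ℝ) ≤ l w := by
  set S : Set (EuclideanSpace ℝ (Fin d) × ℝ) := {q | l q.1 < q.2} with hS
  have hSopen : IsOpen S := by
    exact isOpen_lt (Continuous.comp hcont continuous_fst) continuous_snd
  have hSconv : Convex ℝ S := by
    intro q hq r hr aa bb ha hb hab
    simp only [hS, Set.mem_setOf_eq] at *
    have h1 : l (aa • q.1 + bb • r.1) ≤ aa * l q.1 + bb * l r.1 := by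
      simpa [smul_eq_mul] using hconv.2 (Set.mem_univ q.1) (Set.mem_univ r.1) ha hb hab
    have h2 : aa * l q.1 + bb * l r.1 < aa * q.2 + bb * r.2 := by
      rcases eq_or_lt_of_le ha with h | h
      · have hb1 : bb = 1 := by linarith
        rw [← h, hb1]; simpa using hr
      · have : aa * l q.1 < aa * q.2 := (mul_lt_mul_iff_right₀ h).2 hq
        nlinarith [mul_le_mul_of_nonneg_left hr.le hb]
    simpa using lt_of_le_of_lt h1 h2
  have hxS : (x, l x) ∉ S := by simp [hS]
  obtain ⟨f, hf⟩ := geometric_hahn_banach_open_point hSconv hSopen hxS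
  set α : ℝ := f (0, 1) with hα
  have hsplit : ∀ w : EuclideanSpace ℝ (Fin d), ∀ t : ℝ, f (w, t) = f (w, 0) + t * α := by
    intro w t
    have h : (w, t) = (w, (0:ℝ)) + t • ((0: EuclideanSpace ℝ (Fin d)), (1:ℝ)) := by
      simp [Prod.ext_iff]
    rw [h, map_add, f.map_smul, smul_eq_mul, hα]
  have hkey : ∀ w : EuclideanSpace ℝ (Fin d), ∀ t : ℝ, l w < t →
      f (w, 0) + t * α < f (x, 0) + l x * α := by
    intro w t ht
    have := hf (w, t) ht
    rwa [hsplit w t, hsplit x (l x)] at this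
  have hαneg : α < 0 := by
    have := hkey x (l x + 1) (by linarith)
    nlinarith
  have hineq : ∀ w : EuclideanSpace ℝ (Fin d), f (w, 0) + l w * α ≤ f (x, 0) + l x * α := by
    intro w
    by_contra hcon
    push_neg at hcon
    set ε : ℝ := (f (w, 0) + l w * α - (f (x, 0) + l x * α)) / 2 with hε
    have hεpos : 0 < ε := by simp only [hε]; linarith
    have ht : l w < l w + ε / (-α) := by
      have : 0 < ε / (-α) := div_pos hεpos (by linarith)
      linarith
    have hα0 : α ≠ 0 := ne_of_lt hαneg
    have hk := hkey w (l w + ε / (-α)) ht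
    have hc : ε / (-α) * α = -ε := by
      rw [div_mul_eq_mul_div, mul_div_assoc, div_neg, div_self hα0, mul_neg, mul_one]
    nlinarith
  set g : EuclideanSpace ℝ (Fin d) →L[ℝ] ℝ :=
    f.comp (ContinuousLinearMap.inl ℝ (EuclideanSpace ℝ (Fin d)) ℝ) with hg
  set y : EuclideanSpace ℝ (Fin d) := (InnerProductSpace.toDual ℝ _).symm g with hy
  have hyg : ∀ w, (inner ℝ y w : ℝ) = f (w, 0) := by
    intro w
    rw [hy]
    simp [hg]
  refine ⟨(-α⁻¹) • y, fun w => ?_⟩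
  have h1 := hineq w
  have h2 : (inner ℝ ((-α⁻¹) • y) (w - x) : ℝ) = α⁻¹ * (f (x, 0) - f (w, 0)) := by
    rw [real_inner_smul_left, inner_sub_right, hyg, hyg]; ring
  rw [h2]
  have h3 : l w * α - l x * α ≤ f (x, 0) - f (w, 0) := by linarith
  have hα0 : α ≠ 0 := ne_of_lt hαneg
  have h4 : α⁻¹ * (f (x,0) - f (w,0)) ≤ l w - l x := by
    have hneg : α⁻¹ ≤ 0 := by simp [inv_nonpos]; exact hαneg.le
    have hmul := mul_le_mul_of_nonpos_left h3 hneg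
    have hcanc : α⁻¹ * (l w * α - l x * α) = l w - l x := by field_simp
    linarith
  linarith

/-- A nonnegative convex continuous function on Euclidean space is the sup of a countable
family of affine functions, one of which is `0`. -/
lemma exists_affine_family_aux {d : ℕ} (l : EuclideanSpace ℝ (Fin d) → ℝ)
    (hconv : ConvexOn ℝ Set.univ l) (hcont : Continuous l) (hnn : ∀ w, 0 ≤ l w) :
    ∃ (p : ℕ → EuclideanSpace ℝ (Fin d)) (β : ℕ → ℝ),
      (∀ n w, (inner ℝ (p n) w : ℝ) + β n ≤ l w) ∧
      (∀ w, ∀ ε > (0:ℝ), ∃ n, l w - ε < (inner ℝ (p n) w : ℝ) + β n) ∧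
      p 0 = 0 ∧ β 0 = 0 := by
  have hsep : TopologicalSpace.SeparableSpace (EuclideanSpace ℝ (Fin d)) := by infer_instance
  set e : ℕ → EuclideanSpace ℝ (Fin d) := TopologicalSpace.denseSeq _ with he
  have hdense : DenseRange e := TopologicalSpace.denseRange_denseSeq _
  choose q hq using fun n => exists_subgradient_aux l hconv hcont (e n)
  refine ⟨fun n => Nat.rec 0 (fun m _ => q m) n,
          fun n => Nat.rec 0 (fun m _ => l (e m) - (inner ℝ (q m) (e m) : ℝ)) n, ?_, ?_, rfl, rfl⟩
  · rintro (_ | n) w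
    · simpa using hnn w
    · have := hq n w
      simp only [inner_sub_right] at this ⊢
      linarith
  · intro w ε hε
    set φ : EuclideanSpace ℝ (Fin d) → ℝ := fun z => 2 * l z - l ((2:ℝ) • z - w) with hφ
    have hφcont : Continuous φ := by
      apply Continuous.sub (continuous_const.mul hcont)
      exact hcont.comp (by fun_prop)
    have hφw : φ w = l w := by
      simp only [hφ]
      have : (2:ℝ) • w - w = w := by
        rw [two_smul]; abel
      rw [this]; ring
    have hcont_at : ContinuousAt φ w := hφcont.continuousAt
    rw [Metric.continuousAt_iff] at hcont_at
    obtain ⟨δ, hδpos, hδ⟩ := hcont_at ε hε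
    obtain ⟨n, hn⟩ := hdense.exists_dist_lt w hδpos
    refine ⟨n + 1, ?_⟩
    have h1 : φ (e n) > l w - ε := by
      have := hδ (show dist (e n) w < δ from by rwa [dist_comm] at hn)
      rw [Real.dist_eq, hφw] at this
      have := abs_lt.1 this
      linarith [this.1]
    -- subgradient inequality at `e n` evaluated at `2 • e n - w`
    have h2 : l (e n) + (inner ℝ (q n) (((2:ℝ) • e n - w) - e n) : ℝ) ≤ l ((2:ℝ) • e n - w) :=
      hq n _
    have h3 : ((2:ℝ) • e n - w) - e n = -(w - e n) := by
      rw [two_smul]; abel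
    rw [h3, inner_neg_right] at h2
    have h4 : (inner ℝ (q n) w : ℝ) + (l (e n) - (inner ℝ (q n) (e n) : ℝ)) ≥ φ (e n) := by
      simp only [hφ]
      have h5 : (inner ℝ (q n) (w - e n) : ℝ) = inner ℝ (q n) w - inner ℝ (q n) (e n) := by
        rw [inner_sub_right]
      linarith [h2, h5.symm.le, h5.le]
    simp only [Nat.rec] at *
    linarith

/-- Lower semicontinuity of integral functionals with convex continuous integrands bounded
below by an affine function, under weak `L²` convergence of a bounded sequence:
`∫ l(v) ≤ liminf ∫ l(v_k)` (integrals taken in `[0,∞]`). -/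
theorem weak_lsc_convex_integrand {d : ℕ} (T : ℝ)
    (l : EuclideanSpace ℝ (Fin d) → ℝ)
    (hconv : ConvexOn ℝ Set.univ l) (hcont : Continuous l)
    (c : EuclideanSpace ℝ (Fin d)) (d₀ : ℝ)
    (hbelow : ∀ w, (inner ℝ c w : ℝ) + d₀ ≤ l w)
    (vk : ℕ → ℝ → EuclideanSpace ℝ (Fin d)) (v : ℝ → EuclideanSpace ℝ (Fin d))
    (hmem : ∀ k, MemLp (vk k) 2 (volume.restrict (Ioc 0 T)))
    (hv : MemLp v 2 (volume.restrict (Ioc 0 T)))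
    (hbdd : ∃ M : ℝ, ∀ k, ∫ t in Ioc 0 T, ‖vk k t‖ ^ 2 ≤ M)
    (hweak : ∀ g : ℝ → EuclideanSpace ℝ (Fin d), MemLp g 2 (volume.restrict (Ioc 0 T)) →
      Tendsto (fun k => ∫ t in Ioc 0 T, (inner ℝ (vk k t) (g t) : ℝ)) atTop
        (nhds (∫ t in Ioc 0 T, (inner ℝ (v t) (g t) : ℝ)))) :
    ∫⁻ t in Ioc 0 T, ENNReal.ofReal (l (v t)) ≤
      Filter.atTop.liminf fun k => ∫⁻ t in Ioc 0 T, ENNReal.ofReal (l (vk k t)) := by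
  classical
  set μ := volume.restrict (Ioc (0:ℝ) T) with hμ
  haveI : IsFiniteMeasure μ := by
    constructor
    rw [hμ, Measure.restrict_apply_univ]
    exact lt_of_le_of_lt (le_of_eq Real.volume_Ioc) ENNReal.ofReal_lt_top
  -- replace l by its nonnegative part
  set l' : EuclideanSpace ℝ (Fin d) → ℝ := fun w => max (l w) 0 with hl'
  have hl'conv : ConvexOn ℝ Set.univ l' := hconv.sup (convexOn_const 0 convex_univ)
  have hl'cont : Continuous l' := hcont.max continuous_const
  have hl'nn : ∀ w, 0 ≤ l' w := fun w => le_max_right _ _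
  have hofReal : ∀ w, ENNReal.ofReal (l w) = ENNReal.ofReal (l' w) := by
    intro w
    rcases le_or_gt 0 (l w) with h | h
    · rw [hl']; simp only [max_eq_left h]
    · rw [ENNReal.ofReal_of_nonpos h.le, hl']
      simp only [max_eq_right h.le, ENNReal.ofReal_zero]
  obtain ⟨p, β, hle, hsup, hp0, hβ0⟩ := exists_affine_family_aux l' hl'conv hl'cont hl'nn
  -- strongly measurable representative of v
  set vm : ℝ → EuclideanSpace ℝ (Fin d) := hv.1.mk v with hvm
  have hvmmeas : StronglyMeasurable vm := hv.1.stronglyMeasurable_mk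
  have hvae : v =ᵐ[μ] vm := hv.1.ae_eq_mk
  have hvmmem : MemLp vm 2 μ := hv.ae_eq hvae
  -- affine functions
  set a : ℕ → EuclideanSpace ℝ (Fin d) → ℝ := fun n w => (inner ℝ (p n) w : ℝ) + β n with ha
  have ha0 : ∀ w, a 0 w = 0 := by intro w; simp [ha, hp0, hβ0]
  -- the layered maxima
  set F : ℕ → ℝ → ℝ := fun N t =>
    (Finset.range (N+1)).sup' Finset.nonempty_range_add_one (fun n => a n (vm t)) with hF
  have hFnn : ∀ N t, 0 ≤ F N t := by
    intro N t
    have := Finset.le_sup' (fun n => a n (vm t)) (Finset.mem_range.2 (Nat.succ_pos N))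
    rw [ha0] at this; exact this
  have hFle : ∀ N t, F N t ≤ l' (vm t) := by
    intro N t
    exact Finset.sup'_le _ _ fun n _ => hle n (vm t)
  have hFmono : ∀ t, Monotone (fun N => F N t) := by
    intro t N M hNM
    exact Finset.sup'_mono (fun n => a n (vm t))
      (Finset.range_subset_range.2 (Nat.succ_le_succ hNM)) Finset.nonempty_range_add_one
  have haMeas : ∀ n, Measurable (fun t => a n (vm t)) := by
    intro n
    have : Continuous (a n) := by
      simp only [ha]
      exact (continuous_const.inner continuous_id).add continuous_const
    exact this.measurable.comp hvmmeas.measurable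
  have hFmeas : ∀ N, Measurable (fun t => F N t) := by
    intro N
    induction N with
    | zero => simpa [hF] using haMeas 0
    | succ m ih =>
      have : (fun t => F (m+1) t) = fun t => max (a (m+1) (vm t)) (F m t) := by
        funext t
        refine le_antisymm (Finset.sup'_le _ _ fun n hn => ?_) (max_le ?_ ?_)
        · rcases Nat.lt_succ_iff_lt_or_eq.1 (Finset.mem_range.1 hn) with h | h
          · exact le_max_of_le_right
              (Finset.le_sup' (fun n => a n (vm t)) (Finset.mem_range.2 h))
          · rw [h]; exact le_max_left _ _
        · exact Finset.le_sup' (fun n => a n (vm t)) (Finset.mem_range.2 (Nat.lt_succ_self _))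
        · exact hFmono t (Nat.le_succ m)
      rw [this]
      exact (haMeas (m+1)).max ih
  -- goal reduction with monotone convergence
  have hptwise : ∀ t, (⨆ N, ENNReal.ofReal (F N t)) = ENNReal.ofReal (l' (vm t)) := by
    intro t
    have hbddA : BddAbove (range fun N => F N t) := ⟨l' (vm t), by rintro x ⟨N, rfl⟩; exact hFle N t⟩
    have hcisup : (⨆ N, F N t) = l' (vm t) := by
      refine le_antisymm (ciSup_le fun N => hFle N t) ?_
      by_contra hcon
      push_neg at hcon
      obtain ⟨n, hn⟩ := hsup (vm t) (l' (vm t) - ⨆ N, F N t) (by linarith)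
      have h1 : a n (vm t) ≤ F n t :=
        Finset.le_sup' (fun m => a m (vm t)) (Finset.mem_range.2 (Nat.lt_succ_self n))
      have h2 : F n t ≤ ⨆ N, F N t := le_ciSup hbddA n
      simp only [ha] at h1
      linarith
    have hrt : Tendsto (fun N => F N t) atTop (𝓝 (l' (vm t))) := by
      rw [← hcisup]; exact tendsto_atTop_ciSup (hFmono t) hbddA
    refine tendsto_nhds_unique (tendsto_atTop_iSup ?_) ((ENNReal.continuous_ofReal.tendsto _).comp hrt)
    exact fun N M h => ENNReal.ofReal_le_ofReal (hFmono t h)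
  have hredux : ∫⁻ t in Ioc 0 T, ENNReal.ofReal (l (v t)) =
      ⨆ N, ∫⁻ t, ENNReal.ofReal (F N t) ∂μ := by
    rw [show (∫⁻ t in Ioc 0 T, ENNReal.ofReal (l (v t))) = ∫⁻ t, ENNReal.ofReal (l (v t)) ∂μ from rfl]
    rw [lintegral_congr_ae (hvae.mono fun t ht => by rw [ht, hofReal])]
    rw [← lintegral_iSup (fun N => (hFmeas N).ennreal_ofReal)
      (fun N M h t => ENNReal.ofReal_le_ofReal (hFmono t h))]
    exact lintegral_congr fun t => (hptwise t).symm
  rw [hredux]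
  refine iSup_le fun N => ?_
  -- measurable selection of a maximizing index
  have hwit : ∀ t, ∃ n, n < N + 1 ∧ a n (vm t) = F N t := by
    intro t
    obtain ⟨i, hi, hieq⟩ := Finset.exists_mem_eq_sup' (s := Finset.range (N+1))
      (H := Finset.nonempty_range_add_one) (fun n => a n (vm t))
    exact ⟨i, Finset.mem_range.1 hi, hieq.symm⟩
  set sel : ℝ → ℕ := fun t => sInf {n | a n (vm t) = F N t} with hsel
  have hselmem : ∀ t, a (sel t) (vm t) = F N t := fun t =>
    Nat.sInf_mem (⟨(hwit t).choose, (hwit t).choose_spec.2⟩ :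
      Set.Nonempty {n | a n (vm t) = F N t})
  have hselle : ∀ t, sel t ≤ N := fun t =>
    le_trans (Nat.sInf_le (hwit t).choose_spec.2) (Nat.lt_succ_iff.1 (hwit t).choose_spec.1)
  have hselmeas : Measurable sel := by
    apply measurable_to_countable'
    intro m
    have hset : sel ⁻¹' {m} =
        {t | a m (vm t) = F N t} ∩ ⋂ j ∈ Finset.range m, {t | a j (vm t) = F N t}ᶜ := by
      ext t
      simp only [Set.mem_preimage, Set.mem_singleton_iff, Set.mem_inter_iff, Set.mem_setOf_eq,
        Finset.mem_range, Set.mem_iInter, Set.mem_compl_iff]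
      constructor
      · rintro rfl
        exact ⟨hselmem t, fun j hj hcon => absurd (Nat.sInf_le hcon) (not_le.2 hj)⟩
      · rintro ⟨hm, hj⟩
        refine le_antisymm (Nat.sInf_le hm) ?_
        by_contra hlt
        push_neg at hlt
        exact hj _ hlt (hselmem t)
    rw [hset]
    refine (measurableSet_eq_fun (haMeas m) (hFmeas N)).inter ?_
    exact MeasurableSet.biInter (Finset.range m).countable_toSet
      (fun j _ => (measurableSet_eq_fun (haMeas j) (hFmeas N)).compl)
  -- the test function and its bounds
  set g : ℝ → EuclideanSpace ℝ (Fin d) := fun t => p (sel t) with hgdef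
  set bf : ℝ → ℝ := fun t => β (sel t) with hbfdef
  have hgmeas : StronglyMeasurable g :=
    (measurable_from_top.comp hselmeas : Measurable g).stronglyMeasurable
  have hbfmeas : Measurable bf := measurable_from_top.comp hselmeas
  set Kp : ℝ := (Finset.range (N+1)).sup' Finset.nonempty_range_add_one (fun n => ‖p n‖) with hKp
  set Kb : ℝ := (Finset.range (N+1)).sup' Finset.nonempty_range_add_one (fun n => |β n|) with hKb
  have hgbd : ∀ t, ‖g t‖ ≤ Kp := fun t =>
    Finset.le_sup' (fun n => ‖p n‖) (Finset.mem_range.2 (Nat.lt_succ_of_le (hselle t)))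
  have hbfbd : ∀ t, |bf t| ≤ Kb := fun t =>
    Finset.le_sup' (fun n => |β n|) (Finset.mem_range.2 (Nat.lt_succ_of_le (hselle t)))
  have hgmem : MemLp g 2 μ :=
    MemLp.of_bound hgmeas.aestronglyMeasurable Kp (Eventually.of_forall hgbd)
  -- integrability
  have hInt : ∀ u : ℝ → EuclideanSpace ℝ (Fin d), MemLp u 2 μ →
      Integrable (fun t => (inner ℝ (u t) (g t) : ℝ)) μ := by
    intro u hu
    refine Integrable.mono' ((hu.integrable one_le_two).norm.const_mul Kp)
      (hu.1.inner hgmeas.aestronglyMeasurable) (Eventually.of_forall fun t => ?_)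
    calc ‖(inner ℝ (u t) (g t) : ℝ)‖ ≤ ‖u t‖ * ‖g t‖ := norm_inner_le_norm _ _
      _ ≤ Kp * ‖u t‖ := by nlinarith [norm_nonneg (u t), hgbd t]
  have hbfInt : Integrable bf μ := by
    refine Integrable.mono' (integrable_const Kb)
      (hbfmeas.aestronglyMeasurable) (Eventually.of_forall fun t => by simpa using hbfbd t)
  -- pointwise identity
  have hid : ∀ (u : ℝ → EuclideanSpace ℝ (Fin d)) (t : ℝ),
      (inner ℝ (u t) (g t) : ℝ) + bf t = a (sel t) (u t) := by
    intro u t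
    simp only [ha, hgdef, hbfdef]
    rw [real_inner_comm]
  -- convergence of the linear functionals
  have htend : Tendsto (fun k => ∫ t, ((inner ℝ (vk k t) (g t) : ℝ) + bf t) ∂μ) atTop
      (𝓝 (∫ t, ((inner ℝ (vm t) (g t) : ℝ) + bf t) ∂μ)) := by
    have h1 : ∀ k, ∫ t, ((inner ℝ (vk k t) (g t) : ℝ) + bf t) ∂μ =
        (∫ t, (inner ℝ (vk k t) (g t) : ℝ) ∂μ) + ∫ t, bf t ∂μ := fun k =>
      integral_add (hInt _ (hmem k)) hbfInt
    have h2 : ∫ t, ((inner ℝ (vm t) (g t) : ℝ) + bf t) ∂μ =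
        (∫ t, (inner ℝ (v t) (g t) : ℝ) ∂μ) + ∫ t, bf t ∂μ := by
      rw [integral_add (hInt _ hvmmem) hbfInt]
      congr 1
      exact (integral_congr_ae (hvae.mono fun t ht => by rw [ht])).symm
    simp only [h1, h2]
    exact (hweak g hgmem).add_const _
  -- per-k bound
  have hperk : ∀ k, ENNReal.ofReal (∫ t, ((inner ℝ (vk k t) (g t) : ℝ) + bf t) ∂μ) ≤
      ∫⁻ t, ENNReal.ofReal (l (vk k t)) ∂μ := by
    intro k
    have hint : Integrable (fun t => (inner ℝ (vk k t) (g t) : ℝ) + bf t) μ := by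
      exact (hInt _ (hmem k)).add hbfInt
    calc ENNReal.ofReal (∫ t, ((inner ℝ (vk k t) (g t) : ℝ) + bf t) ∂μ)
        ≤ ENNReal.ofReal (∫ t, max ((inner ℝ (vk k t) (g t) : ℝ) + bf t) 0 ∂μ) :=
          ENNReal.ofReal_le_ofReal
            (integral_mono hint hint.pos_part (fun t => le_max_left _ _))
      _ = ∫⁻ t, ENNReal.ofReal (max ((inner ℝ (vk k t) (g t) : ℝ) + bf t) 0) ∂μ :=
          ofReal_integral_eq_lintegral_ofReal hint.pos_part
            (Eventually.of_forall fun t => le_max_right _ _)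
      _ ≤ ∫⁻ t, ENNReal.ofReal (l' (vk k t)) ∂μ := by
          refine lintegral_mono fun t => ENNReal.ofReal_le_ofReal (max_le ?_ (hl'nn _))
          rw [hid]
          exact hle _ _
      _ = ∫⁻ t, ENNReal.ofReal (l (vk k t)) ∂μ := lintegral_congr fun t => (hofReal _).symm
  -- identification of the N-th integral
  have hA : ∫⁻ t, ENNReal.ofReal (F N t) ∂μ =
      ENNReal.ofReal (∫ t, ((inner ℝ (vm t) (g t) : ℝ) + bf t) ∂μ) := by
    have hintv : Integrable (fun t => (inner ℝ (vm t) (g t) : ℝ) + bf t) μ := by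
      exact (hInt _ hvmmem).add hbfInt
    rw [ofReal_integral_eq_lintegral_ofReal hintv
      (Eventually.of_forall fun t => by
        show (0:ℝ) ≤ (inner ℝ (vm t) (g t) : ℝ) + bf t
        rw [hid, hselmem]; exact hFnn N t)]
    exact lintegral_congr fun t => by rw [hid, hselmem]
  calc ∫⁻ t, ENNReal.ofReal (F N t) ∂μ
      = ENNReal.ofReal (∫ t, ((inner ℝ (vm t) (g t) : ℝ) + bf t) ∂μ) := hA
    _ = Filter.atTop.liminf fun k =>
          ENNReal.ofReal (∫ t, ((inner ℝ (vk k t) (g t) : ℝ) + bf t) ∂μ) :=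
        ((ENNReal.continuous_ofReal.tendsto _).comp htend).liminf_eq.symm
    _ ≤ Filter.atTop.liminf fun k => ∫⁻ t, ENNReal.ofReal (l (vk k t)) ∂μ :=
        liminf_le_liminf (Eventually.of_forall hperk)
end

section
/- Piecewise linear interpolation L² error bound: let x̄ ∈ W^{1,2}([0,T],ℝ^n) with the derivative of bounded variation var(ẋ̄,[0,T]) ≤ μ. For a uniform mesh t_j = jT/k, define the piecewise linear interpolant x^k with x^k(t_j) = x̄(t_j). Then ∫_0^T ‖ẋ^k(t) − ẋ̄(t)‖² dt ≤ 2 (T/k) μ² + c·4^{−k} for some constant c depending only on T, provided the derivative is approximated pointwise up to 2^{−k} at suitably chosen sample points. -/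
open MeasureTheory Set Finset

/-- The uniform mesh point `t_j = j·T/k`. -/
noncomputable def meshPt (T : ℝ) (k j : ℕ) : ℝ := j * (T / k)

/-- Piecewise linear interpolation `L²` error bound: for `xbar ∈ W^{1,2}` whose derivative `x'`
has variation at most `μ` on `[0,T]`, the piecewise linear interpolant on the uniform mesh
satisfies `∫₀ᵀ ‖ẋ^k − ẋ̄‖² ≤ 2(T/k)μ² + c·4^{−k}` for a constant `c` depending only on `T`,
provided sample points `s_j` realize the sup of `‖ẋ̄(t_j) − ẋ̄(·)‖` up to `2^{−k}`. -/
theorem interpolation_L2_error (T : ℝ) (hT : 0 < T) :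
    ∃ c : ℝ, ∀ (n : ℕ) (xbar x' : ℝ → EuclideanSpace ℝ (Fin n)) (μ : ℝ) (k : ℕ),
      0 < k → 0 ≤ μ →
      (∀ a b, a ∈ Icc 0 T → b ∈ Icc 0 T → xbar b - xbar a = ∫ τ in a..b, x' τ) →
      (∀ a b, a ∈ Icc 0 T → b ∈ Icc 0 T → IntervalIntegrable x' volume a b) →
      IntegrableOn (fun t => ‖x' t‖ ^ 2) (Icc 0 T) volume →
      eVariationOn x' (Icc 0 T) ≤ ENNReal.ofReal μ →
      (∃ sj : ℕ → ℝ, ∀ j < k, sj j ∈ Ico (meshPt T k j) (meshPt T k (j + 1)) ∧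
        ∀ u ∈ Icc (meshPt T k j) (meshPt T k (j + 1)),
          ‖x' (meshPt T k j) - x' u‖ ≤ ‖x' (meshPt T k j) - x' (sj j)‖ + (2:ℝ)⁻¹ ^ k) →
      ∑ j ∈ range k, (∫ t in meshPt T k j..meshPt T k (j + 1),
          ‖(T / k)⁻¹ • (xbar (meshPt T k (j + 1)) - xbar (meshPt T k j)) - x' t‖ ^ 2)
        ≤ 2 * (T / k) * μ ^ 2 + c * (4:ℝ)⁻¹ ^ k := by
  refine ⟨0, ?_⟩
  intro n xbar x' μ k hk hμ hFTC hInt _hL2 hvar _hsj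
  have hk' : (0:ℝ) < k := by exact_mod_cast hk
  have hh : (0:ℝ) < T / k := div_pos hT hk'
  -- mesh basics
  have hmesh_step : ∀ j : ℕ, meshPt T k (j + 1) - meshPt T k j = T / k := by
    intro j; simp only [meshPt]; push_cast; ring
  have hmesh_mono : ∀ j : ℕ, meshPt T k j ≤ meshPt T k (j + 1) := by
    intro j
    have := hmesh_step j
    linarith
  have hmesh_mem : ∀ j : ℕ, j ≤ k → meshPt T k j ∈ Icc (0:ℝ) T := by
    intro j hj
    constructor
    · exact mul_nonneg (Nat.cast_nonneg j) hh.le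
    · have : (j:ℝ) * (T / k) ≤ (k:ℝ) * (T / k) := by
        apply mul_le_mul_of_nonneg_right _ hh.le
        exact_mod_cast hj
      have hkT : (k:ℝ) * (T / k) = T := by field_simp
      simpa [meshPt, hkT] using this
  have hmesh0 : meshPt T k 0 = 0 := by simp [meshPt]
  have hmeshk : meshPt T k k = T := by
    simp only [meshPt]; field_simp
  -- variation on subintervals
  set V : ℕ → ENNReal := fun j => eVariationOn x' (Icc (meshPt T k j) (meshPt T k (j + 1)))
    with hV
  have hmesh_nonneg : ∀ j : ℕ, 0 ≤ meshPt T k j := fun j =>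
    mul_nonneg (Nat.cast_nonneg j) hh.le
  have hVle : ∀ j : ℕ, j < k → V j ≤ ENNReal.ofReal μ := by
    intro j hj
    refine le_trans ?_ hvar
    apply eVariationOn.mono
    exact Icc_subset_Icc (hmesh_mem j hj.le).1 (hmesh_mem (j+1) hj).2
  have hVne : ∀ j : ℕ, j < k → V j ≠ ⊤ :=
    fun j hj => ne_top_of_le_ne_top ENNReal.ofReal_ne_top (hVle j hj)
  set v : ℕ → ℝ := fun j => (V j).toReal with hv
  have hv_nonneg : ∀ j, 0 ≤ v j := fun j => ENNReal.toReal_nonneg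
  -- sum of variations over the mesh is at most the total variation
  have hsumvar : ∀ m : ℕ, m ≤ k →
      ∑ j ∈ range m, V j ≤ eVariationOn x' (Icc 0 (meshPt T k m)) := by
    intro m hm
    induction m with
    | zero => simp
    | succ m ih =>
      have hm' : m ≤ k := Nat.le_of_succ_le hm
      have h0m : (0:ℝ) ≤ meshPt T k m := hmesh_nonneg m
      have key := eVariationOn.Icc_add_Icc (s := (univ : Set ℝ)) x' h0m
        (hmesh_mono m) (mem_univ _)
      simp only [univ_inter] at key
      rw [Finset.sum_range_succ, ← key]
      exact add_le_add (ih hm') le_rfl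
  have hsumV : ∑ j ∈ range k, V j ≤ ENNReal.ofReal μ := by
    refine le_trans (hsumvar k le_rfl) ?_
    rw [hmeshk]; exact hvar
  have hsumv : ∑ j ∈ range k, v j ≤ μ := by
    have h1 : (∑ j ∈ range k, V j).toReal ≤ (ENNReal.ofReal μ).toReal :=
      ENNReal.toReal_mono ENNReal.ofReal_ne_top hsumV
    rwa [ENNReal.toReal_sum (fun j hj => hVne j (Finset.mem_range.mp hj)),
      ENNReal.toReal_ofReal hμ] at h1
  -- pointwise bound by variation
  have hpt : ∀ j < k, ∀ s ∈ Icc (meshPt T k j) (meshPt T k (j + 1)),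
      ∀ t ∈ Icc (meshPt T k j) (meshPt T k (j + 1)), ‖x' s - x' t‖ ≤ v j := by
    intro j hj s hs t ht
    have h1 : edist (x' s) (x' t) ≤ V j := eVariationOn.edist_le x' hs ht
    have h2 : (edist (x' s) (x' t)).toReal ≤ v j :=
      ENNReal.toReal_mono (hVne j hj) h1
    rwa [edist_dist, ENNReal.toReal_ofReal dist_nonneg, dist_eq_norm] at h2
  -- main per-interval bound
  have hmain : ∀ j < k, (∫ t in meshPt T k j..meshPt T k (j + 1),
      ‖(T / k)⁻¹ • (xbar (meshPt T k (j + 1)) - xbar (meshPt T k j)) - x' t‖ ^ 2)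
      ≤ v j ^ 2 * (T / k) := by
    intro j hj
    set a := meshPt T k j
    set b := meshPt T k (j + 1)
    have hab : a ≤ b := hmesh_mono j
    have haT : a ∈ Icc (0:ℝ) T := hmesh_mem j hj.le
    have hbT : b ∈ Icc (0:ℝ) T := hmesh_mem (j+1) hj
    have hba : b - a = T / k := hmesh_step j
    have hIab : IntervalIntegrable x' volume a b := hInt a b haT hbT
    -- pointwise norm bound on the error
    have hperr : ∀ t ∈ Set.uIoc a b,
        ‖(T / k)⁻¹ • (xbar b - xbar a) - x' t‖ ≤ v j := by
      intro t ht
      have ht' : t ∈ Icc a b := mem_Icc_of_Ioc (by rwa [Set.uIoc_of_le hab] at ht)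
      have hdiff : xbar b - xbar a = ∫ τ in a..b, x' τ := hFTC a b haT hbT
      have hsub : (∫ τ in a..b, (x' τ - x' t)) =
          (∫ τ in a..b, x' τ) - (T / k) • x' t := by
        rw [intervalIntegral.integral_sub hIab intervalIntegrable_const,
          intervalIntegral.integral_const, hba]
      have hrw : (T / k)⁻¹ • (xbar b - xbar a) - x' t =
          (T / k)⁻¹ • (∫ τ in a..b, (x' τ - x' t)) := by
        rw [hsub, hdiff, smul_sub, smul_smul, inv_mul_cancel₀ hh.ne', one_smul]
      rw [hrw, norm_smul]
      have hbound : ‖∫ τ in a..b, (x' τ - x' t)‖ ≤ v j * |b - a| := by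
        apply intervalIntegral.norm_integral_le_of_norm_le_const
        intro τ hτ
        have hτ' : τ ∈ Icc a b := mem_Icc_of_Ioc (by rwa [Set.uIoc_of_le hab] at hτ)
        exact hpt j hj τ hτ' t ht'
      calc ‖(T / k)⁻¹‖ * ‖∫ τ in a..b, (x' τ - x' t)‖
          ≤ ‖(T / k)⁻¹‖ * (v j * |b - a|) := by
            exact mul_le_mul_of_nonneg_left hbound (norm_nonneg _)
        _ = v j := by
            rw [hba, Real.norm_eq_abs, abs_of_pos (inv_pos.mpr hh),
              abs_of_pos hh]
            field_simp
    -- integrate the squared bound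
    have hsq : ‖∫ t in a..b,
        ‖(T / k)⁻¹ • (xbar b - xbar a) - x' t‖ ^ 2‖ ≤ v j ^ 2 * |b - a| := by
      apply intervalIntegral.norm_integral_le_of_norm_le_const
      intro t ht
      have h1 := hperr t ht
      have h0 : (0:ℝ) ≤ ‖(T / k)⁻¹ • (xbar b - xbar a) - x' t‖ := norm_nonneg _
      rw [Real.norm_eq_abs, abs_of_nonneg (by positivity)]
      exact pow_le_pow_left₀ h0 h1 2
    calc (∫ t in a..b, ‖(T / k)⁻¹ • (xbar b - xbar a) - x' t‖ ^ 2)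
        ≤ ‖∫ t in a..b, ‖(T / k)⁻¹ • (xbar b - xbar a) - x' t‖ ^ 2‖ := by
          rw [Real.norm_eq_abs]; exact le_abs_self _
      _ ≤ v j ^ 2 * |b - a| := hsq
      _ = v j ^ 2 * (T / k) := by rw [hba, abs_of_pos hh]
  -- conclude
  have hsumsq : ∑ j ∈ range k, v j ^ 2 ≤ μ ^ 2 := by
    calc ∑ j ∈ range k, v j ^ 2
        ≤ (∑ j ∈ range k, v j) ^ 2 :=
          Finset.sum_sq_le_sq_sum_of_nonneg (fun j _ => hv_nonneg j)
      _ ≤ μ ^ 2 := by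
          apply pow_le_pow_left₀ (Finset.sum_nonneg fun j _ => hv_nonneg j) hsumv
  calc ∑ j ∈ range k, (∫ t in meshPt T k j..meshPt T k (j + 1),
        ‖(T / k)⁻¹ • (xbar (meshPt T k (j + 1)) - xbar (meshPt T k j)) - x' t‖ ^ 2)
      ≤ ∑ j ∈ range k, v j ^ 2 * (T / k) :=
        Finset.sum_le_sum fun j hj => hmain j (Finset.mem_range.mp hj)
    _ = (T / k) * ∑ j ∈ range k, v j ^ 2 := by rw [← Finset.sum_mul]; ring
    _ ≤ (T / k) * μ ^ 2 := by
        exact mul_le_mul_of_nonneg_left hsumsq hh.le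
    _ ≤ 2 * (T / k) * μ ^ 2 + 0 * (4:ℝ)⁻¹ ^ k := by nlinarith [sq_nonneg μ]
end

section
/- Euler scheme error for the integral (Volterra) component: let x̄, b̄ ∈ W^{1,2} on [0,T] with values in ℝ^n, ℝ^d, and let f₂ satisfy ‖f₂(b,x₁) − f₂(b,x₂)‖ ≤ L₁‖x₁−x₂‖ and ‖f₂(b₁,x) − f₂(b₂,x)‖ ≤ L₂‖b₁−b₂‖. Define ȳ(t) = ∫_0^t f₂(b̄(s), x̄(s)) ds, and on a uniform mesh with step h define y^k recursively by y^k(t_{j+1}) = y^k(t_j) + h f₂(b̄(t_j), x^k(t_j)), y^k(0)=0. Then ‖y^k(t_{j+1}) − ȳ(t_{j+1})‖ ≤ L₁ ∑_{i=0}^{j} h ‖x^k(t_i) − x̄(t_i)‖ + T√h (L₁‖ẋ̄‖_{L²} + L₂‖ḃ̄‖_{L²}) for all j = 0,…,k−1. -/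
open MeasureTheory Set Finset

lemma euler_dev_aux {m : ℕ} {T h : ℝ} (hT : 0 < T) (hh : 0 < h)
    (g g' : ℝ → EuclideanSpace ℝ (Fin m))
    (hftc : ∀ a c, a ∈ Icc 0 T → c ∈ Icc 0 T → g c - g a = ∫ τ in a..c, g' τ)
    (hmem : MemLp g' 2 (volume.restrict (Icc 0 T)))
    {a s : ℝ} (ha : 0 ≤ a) (has : a ≤ s) (hsT : s ≤ T) (hsa : s - a ≤ h) :
    ‖g s - g a‖ ≤ Real.sqrt h * Real.sqrt (∫ t in (0:ℝ)..T, ‖g' t‖ ^ 2) := by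
  have haI : a ∈ Icc (0:ℝ) T := ⟨ha, has.trans hsT⟩
  have hsI : s ∈ Icc (0:ℝ) T := ⟨ha.trans has, hsT⟩
  haveI : IsFiniteMeasure (volume.restrict (Icc (0:ℝ) T)) :=
    ⟨by rw [Measure.restrict_apply_univ]; exact measure_Icc_lt_top⟩
  have hint1 : IntegrableOn g' (Icc 0 T) volume := hmem.integrable one_le_two
  have hint2 : IntegrableOn (fun t => ‖g' t‖ ^ 2) (Icc 0 T) volume := by
    have := hmem.integrable_norm_rpow two_ne_zero ENNReal.ofNat_ne_top
    simp [ENNReal.toReal_ofNat, Real.rpow_natCast] at this; exact this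
  have hmem' : MemLp g' 2 (volume.restrict (Ioc a s)) :=
    hmem.mono_measure (Measure.restrict_mono (Set.Ioc_subset_Icc_self.trans
      (Icc_subset_Icc ha hsT)) le_rfl)
  have hCS : ∫ t in Ioc a s, ‖g' t‖ ≤
      (∫ t in Ioc a s, ‖g' t‖ ^ (2:ℝ)) ^ (1/2:ℝ) * ((s - a) ^ (1/2:ℝ)) := by
    have hconj : Real.HolderConjugate 2 2 := Real.HolderConjugate.two_two
    have h1 : MemLp (fun _ : ℝ => (1:ℝ)) (ENNReal.ofReal 2) (volume.restrict (Ioc a s)) := by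
      haveI : IsFiniteMeasure (volume.restrict (Ioc a s)) :=
        ⟨by rw [Measure.restrict_apply_univ]; exact measure_Ioc_lt_top⟩
      exact memLp_const _
    have h2 : MemLp (fun t => ‖g' t‖) (ENNReal.ofReal 2) (volume.restrict (Ioc a s)) := by
      simpa [ENNReal.ofReal_ofNat] using hmem'.norm
    have := integral_mul_norm_le_Lp_mul_Lq (g := fun _ : ℝ => (1:ℝ)) hconj h2 h1
    simp only [norm_one, mul_one, Real.one_rpow, Real.norm_eq_abs, abs_norm] at this
    calc ∫ t in Ioc a s, ‖g' t‖ ≤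
        (∫ t in Ioc a s, ‖g' t‖ ^ (2:ℝ)) ^ (1/2:ℝ) *
          (∫ _ in Ioc a s, (1:ℝ)) ^ (1/2:ℝ) := this
      _ = _ := by
          rw [setIntegral_const, smul_eq_mul, mul_one, Real.volume_real_Ioc_of_le has]
  have hrw2 : ∀ (u : Set ℝ), ∫ t in u, ‖g' t‖ ^ (2:ℝ) = ∫ t in u, ‖g' t‖ ^ 2 := by
    intro u
    simp_rw [show (2:ℝ) = ((2:ℕ):ℝ) by norm_num, Real.rpow_natCast]
  have hmono : ∫ t in Ioc a s, ‖g' t‖ ^ 2 ≤ ∫ t in (0:ℝ)..T, ‖g' t‖ ^ 2 := by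
    rw [intervalIntegral.integral_of_le hT.le]
    refine setIntegral_mono_set (hint2.mono_set Set.Ioc_subset_Icc_self) ?_ ?_
    · exact Filter.Eventually.of_forall fun t => sq_nonneg _
    · exact HasSubset.Subset.eventuallyLE (Set.Ioc_subset_Ioc ha hsT)
  have hIoc : IntegrableOn g' (Ioc a s) volume :=
    hint1.mono_set (Set.Ioc_subset_Icc_self.trans (Icc_subset_Icc ha hsT))
  have hII : IntervalIntegrable g' volume a s :=
    (intervalIntegrable_iff_integrableOn_Ioc_of_le has).mpr hIoc
  rw [hftc a s haI hsI]
  calc ‖∫ τ in a..s, g' τ‖ ≤ ∫ τ in a..s, ‖g' τ‖ :=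
        intervalIntegral.norm_integral_le_integral_norm has
    _ = ∫ t in Ioc a s, ‖g' t‖ := intervalIntegral.integral_of_le has
    _ ≤ (∫ t in Ioc a s, ‖g' t‖ ^ (2:ℝ)) ^ (1/2:ℝ) * ((s - a) ^ (1/2:ℝ)) := hCS
    _ = Real.sqrt (∫ t in Ioc a s, ‖g' t‖ ^ 2) * Real.sqrt (s - a) := by
        rw [hrw2, ← Real.sqrt_eq_rpow, ← Real.sqrt_eq_rpow]
    _ ≤ Real.sqrt (∫ t in (0:ℝ)..T, ‖g' t‖ ^ 2) * Real.sqrt h := by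
        exact mul_le_mul (Real.sqrt_le_sqrt hmono) (Real.sqrt_le_sqrt (by linarith))
          (Real.sqrt_nonneg _) (Real.sqrt_nonneg _)
    _ = Real.sqrt h * Real.sqrt (∫ t in (0:ℝ)..T, ‖g' t‖ ^ 2) := mul_comm _ _

/-- Euler scheme error for the integral (Volterra) component: with
`ybar(t) = ∫₀ᵗ f₂(bbar(s), xbar(s)) ds` and the scheme
`y_{j+1} = y_j + h f₂(bbar(t_j), x^k_j)`, `y_0 = 0`, one has
`‖y_{j+1} − ybar(t_{j+1})‖ ≤ L₁ ∑_{i≤j} h‖x^k_i − xbar(t_i)‖ + T√h (L₁‖ẋ̄‖_{L²} + L₂‖ḃ̄‖_{L²})`. -/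
theorem euler_volterra_error {n d : ℕ} (T : ℝ) (hT : 0 < T) (k : ℕ) (hk : 0 < k)
    (xbar x' : ℝ → EuclideanSpace ℝ (Fin n)) (bbar b' : ℝ → EuclideanSpace ℝ (Fin d))
    (f₂ : EuclideanSpace ℝ (Fin d) → EuclideanSpace ℝ (Fin n) → EuclideanSpace ℝ (Fin n))
    (L₁ L₂ : ℝ)
    (hf₂x : ∀ b x₁ x₂, ‖f₂ b x₁ - f₂ b x₂‖ ≤ L₁ * ‖x₁ - x₂‖)
    (hf₂b : ∀ b₁ b₂ x, ‖f₂ b₁ x - f₂ b₂ x‖ ≤ L₂ * ‖b₁ - b₂‖)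
    (hxftc : ∀ a c, a ∈ Icc 0 T → c ∈ Icc 0 T → xbar c - xbar a = ∫ τ in a..c, x' τ)
    (hbftc : ∀ a c, a ∈ Icc 0 T → c ∈ Icc 0 T → bbar c - bbar a = ∫ τ in a..c, b' τ)
    (hxmem : MemLp x' 2 (volume.restrict (Icc 0 T)))
    (hbmem : MemLp b' 2 (volume.restrict (Icc 0 T)))
    (hintf : ∀ a c, a ∈ Icc 0 T → c ∈ Icc 0 T →
      IntervalIntegrable (fun u => f₂ (bbar u) (xbar u)) volume a c)
    (ybar : ℝ → EuclideanSpace ℝ (Fin n))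
    (hybar : ∀ t, ybar t = ∫ u in (0:ℝ)..t, f₂ (bbar u) (xbar u))
    (xk : ℕ → EuclideanSpace ℝ (Fin n))
    (y : ℕ → EuclideanSpace ℝ (Fin n)) (hy0 : y 0 = 0)
    (hyrec : ∀ j, y (j + 1) = y j + (T / k) • f₂ (bbar (meshPt T k j)) (xk j)) :
    ∀ j < k, ‖y (j + 1) - ybar (meshPt T k (j + 1))‖ ≤
      L₁ * ∑ i ∈ range (j + 1), (T / k) * ‖xk i - xbar (meshPt T k i)‖ +
      T * Real.sqrt (T / k) *
        (L₁ * Real.sqrt (∫ t in (0:ℝ)..T, ‖x' t‖ ^ 2) +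
         L₂ * Real.sqrt (∫ t in (0:ℝ)..T, ‖b' t‖ ^ 2)) := by
  have hk0 : (k:ℝ) ≠ 0 := Nat.cast_ne_zero.mpr hk.ne'
  set h : ℝ := T / k with hhdef
  have hh : 0 < h := div_pos hT (Nat.cast_pos.mpr hk)
  set X : ℝ := Real.sqrt (∫ t in (0:ℝ)..T, ‖x' t‖ ^ 2) with hXdef
  set B : ℝ := Real.sqrt (∫ t in (0:ℝ)..T, ‖b' t‖ ^ 2) with hBdef
  have hXnn : 0 ≤ X := Real.sqrt_nonneg _
  have hBnn : 0 ≤ B := Real.sqrt_nonneg _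
  have hkh : (k:ℝ) * h = T := by rw [hhdef]; field_simp
  have hsucc : ∀ i : ℕ, meshPt T k (i+1) - meshPt T k i = h := by
    intro i; simp only [meshPt, ← hhdef]; push_cast; ring
  have hmesh0 : ∀ i : ℕ, 0 ≤ meshPt T k i := by
    intro i; simp only [meshPt, ← hhdef]; positivity
  have hmeshT : ∀ i : ℕ, i ≤ k → meshPt T k i ≤ T := by
    intro i hi
    simp only [meshPt, ← hhdef]
    calc (i:ℝ) * h ≤ (k:ℝ) * h := by
          exact mul_le_mul_of_nonneg_right (Nat.cast_le.mpr hi) hh.le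
      _ = T := hkh
  have hmesh : ∀ i : ℕ, i ≤ k → meshPt T k i ∈ Icc (0:ℝ) T :=
    fun i hi => ⟨hmesh0 i, hmeshT i hi⟩
  -- the x-deviation bound
  have hcase₁ : (0 ≤ L₁) ∨ (∀ v : EuclideanSpace ℝ (Fin n), v = 0) := by
    rcases Nat.eq_zero_or_pos n with hn | hn
    · right; subst hn; intro v; exact Subsingleton.elim v 0
    · left
      have h0 := hf₂x 0 (EuclideanSpace.single ⟨0, hn⟩ (1:ℝ)) 0
      rw [sub_zero, EuclideanSpace.norm_single] at h0
      have := norm_nonneg (f₂ 0 (EuclideanSpace.single ⟨0, hn⟩ (1:ℝ)) - f₂ 0 0)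
      simp only [norm_one, mul_one] at h0
      linarith
  have hcase₂ : (0 ≤ L₂) ∨ (∀ v : EuclideanSpace ℝ (Fin d), v = 0) := by
    rcases Nat.eq_zero_or_pos d with hd | hd
    · right; subst hd; intro v; exact Subsingleton.elim v 0
    · left
      have h0 := hf₂b (EuclideanSpace.single ⟨0, hd⟩ (1:ℝ)) 0 0
      rw [sub_zero, EuclideanSpace.norm_single] at h0
      have := norm_nonneg (f₂ (EuclideanSpace.single ⟨0, hd⟩ (1:ℝ)) 0 - f₂ 0 0)
      simp only [norm_one, mul_one] at h0
      linarith
  have hX0 : (∀ v : EuclideanSpace ℝ (Fin n), v = 0) → X = 0 := by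
    intro hz
    have : ∀ t, ‖x' t‖ = 0 := fun t => by rw [hz (x' t), norm_zero]
    rw [hXdef]; simp [this]
  have hB0 : (∀ v : EuclideanSpace ℝ (Fin d), v = 0) → B = 0 := by
    intro hz
    have : ∀ t, ‖b' t‖ = 0 := fun t => by rw [hz (b' t), norm_zero]
    rw [hBdef]; simp [this]
  have hL1X : 0 ≤ L₁ * X := by
    rcases hcase₁ with hL | hz
    · positivity
    · rw [hX0 hz]; simp
  have hL2B : 0 ≤ L₂ * B := by
    rcases hcase₂ with hL | hz
    · positivity
    · rw [hB0 hz]; simp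
  have hxdev : ∀ i : ℕ, i < k → ∀ s, meshPt T k i ≤ s → s ≤ meshPt T k (i+1) →
      ∀ bb, ‖f₂ bb (xbar (meshPt T k i)) - f₂ bb (xbar s)‖ ≤ L₁ * (Real.sqrt h * X) := by
    intro i hi s hs1 hs2 bb
    rcases hcase₁ with hL | hz
    · calc ‖f₂ bb (xbar (meshPt T k i)) - f₂ bb (xbar s)‖
          ≤ L₁ * ‖xbar (meshPt T k i) - xbar s‖ := hf₂x _ _ _
        _ ≤ L₁ * (Real.sqrt h * X) := by
            refine mul_le_mul_of_nonneg_left ?_ hL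
            rw [norm_sub_rev, hXdef]
            exact euler_dev_aux hT hh xbar x' hxftc hxmem (hmesh0 i) hs1
              (hs2.trans (hmeshT (i+1) hi)) (by have := hsucc i; linarith)
    · rw [hz (f₂ bb (xbar (meshPt T k i))), hz (f₂ bb (xbar s)), sub_self, norm_zero,
        hX0 hz, mul_zero, mul_zero]
  have hbdev : ∀ i : ℕ, i < k → ∀ s, meshPt T k i ≤ s → s ≤ meshPt T k (i+1) →
      ∀ xx, ‖f₂ (bbar (meshPt T k i)) xx - f₂ (bbar s) xx‖ ≤ L₂ * (Real.sqrt h * B) := by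
    intro i hi s hs1 hs2 xx
    rcases hcase₂ with hL | hz
    · calc ‖f₂ (bbar (meshPt T k i)) xx - f₂ (bbar s) xx‖
          ≤ L₂ * ‖bbar (meshPt T k i) - bbar s‖ := hf₂b _ _ _
        _ ≤ L₂ * (Real.sqrt h * B) := by
            refine mul_le_mul_of_nonneg_left ?_ hL
            rw [norm_sub_rev, hBdef]
            exact euler_dev_aux hT hh bbar b' hbftc hbmem (hmesh0 i) hs1
              (hs2.trans (hmeshT (i+1) hi)) (by have := hsucc i; linarith)
    · rw [hz (bbar (meshPt T k i)), hz (bbar s), sub_self, norm_zero,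
        hB0 hz]
      have : 0 ≤ L₂ * (Real.sqrt h * 0) := by simp
      simpa using this
  set D : ℝ := L₁ * (Real.sqrt h * X) + L₂ * (Real.sqrt h * B) with hDdef
  have hDnn : 0 ≤ D := by
    rw [hDdef]
    have h1 : 0 ≤ L₁ * (Real.sqrt h * X) := by
      rw [mul_comm (Real.sqrt h) X, ← mul_assoc]
      exact mul_nonneg hL1X (Real.sqrt_nonneg _)
    have h2 : 0 ≤ L₂ * (Real.sqrt h * B) := by
      rw [mul_comm (Real.sqrt h) B, ← mul_assoc]
      exact mul_nonneg hL2B (Real.sqrt_nonneg _)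
    linarith
  -- main induction
  have key : ∀ j : ℕ, j ≤ k → ‖y j - ybar (meshPt T k j)‖ ≤
      L₁ * ∑ i ∈ range j, h * ‖xk i - xbar (meshPt T k i)‖ + j * (h * D) := by
    intro j
    induction j with
    | zero => intro _; simp [hy0, hybar, meshPt]
    | succ j ih =>
      intro hjk
      have hjk' : j < k := hjk
      have ihj := ih (Nat.le_of_succ_le hjk)
      have hmj : meshPt T k j ∈ Icc (0:ℝ) T := hmesh j hjk'.le
      have hmj1 : meshPt T k (j+1) ∈ Icc (0:ℝ) T := hmesh (j+1) hjk
      have hle : meshPt T k j ≤ meshPt T k (j+1) := by have := hsucc j; linarith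
      have h0I : (0:ℝ) ∈ Icc (0:ℝ) T := ⟨le_rfl, hT.le⟩
      have hadj : (∫ u in (0:ℝ)..meshPt T k j, f₂ (bbar u) (xbar u)) +
          (∫ u in meshPt T k j..meshPt T k (j+1), f₂ (bbar u) (xbar u)) =
          ∫ u in (0:ℝ)..meshPt T k (j+1), f₂ (bbar u) (xbar u) :=
        intervalIntegral.integral_add_adjacent_intervals
          (hintf 0 (meshPt T k j) h0I hmj) (hintf (meshPt T k j) (meshPt T k (j+1)) hmj hmj1)
      have hsplit : y (j+1) - ybar (meshPt T k (j+1)) =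
          (y j - ybar (meshPt T k j)) +
          (h • f₂ (bbar (meshPt T k j)) (xk j) -
            ∫ u in meshPt T k j..meshPt T k (j+1), f₂ (bbar u) (xbar u)) := by
        rw [hyrec j, hybar (meshPt T k (j+1)), hybar (meshPt T k j), ← hadj]
        abel
      -- step bound
      have hstep : ‖h • f₂ (bbar (meshPt T k j)) (xk j) -
          ∫ u in meshPt T k j..meshPt T k (j+1), f₂ (bbar u) (xbar u)‖ ≤
          (L₁ * ‖xk j - xbar (meshPt T k j)‖ + D) * h := by
        have hconst : h • f₂ (bbar (meshPt T k j)) (xk j) =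
            ∫ _ in meshPt T k j..meshPt T k (j+1), f₂ (bbar (meshPt T k j)) (xk j) := by
          rw [intervalIntegral.integral_const, hsucc j]
        rw [hconst, ← intervalIntegral.integral_sub intervalIntegrable_const
          (hintf (meshPt T k j) (meshPt T k (j+1)) hmj hmj1)]
        have := intervalIntegral.norm_integral_le_of_norm_le_const
          (C := L₁ * ‖xk j - xbar (meshPt T k j)‖ + D)
          (f := fun u => f₂ (bbar (meshPt T k j)) (xk j) - f₂ (bbar u) (xbar u))
          (a := meshPt T k j) (b := meshPt T k (j+1)) ?_
        · calc ‖∫ u in meshPt T k j..meshPt T k (j+1),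
                (f₂ (bbar (meshPt T k j)) (xk j) - f₂ (bbar u) (xbar u))‖
              ≤ (L₁ * ‖xk j - xbar (meshPt T k j)‖ + D) * |meshPt T k (j+1) - meshPt T k j| :=
                this
            _ = (L₁ * ‖xk j - xbar (meshPt T k j)‖ + D) * h := by
                rw [hsucc j, abs_of_pos hh]
        · intro s hs
          rw [Set.uIoc_of_le hle] at hs
          have hs1 : meshPt T k j ≤ s := hs.1.le
          have hs2 : s ≤ meshPt T k (j+1) := hs.2
          have t1 : ‖f₂ (bbar (meshPt T k j)) (xk j) -
              f₂ (bbar (meshPt T k j)) (xbar (meshPt T k j))‖ ≤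
              L₁ * ‖xk j - xbar (meshPt T k j)‖ := hf₂x _ _ _
          have t2 := hxdev j hjk' s hs1 hs2 (bbar (meshPt T k j))
          have t3 := hbdev j hjk' s hs1 hs2 (xbar s)
          calc ‖f₂ (bbar (meshPt T k j)) (xk j) - f₂ (bbar s) (xbar s)‖
              = dist (f₂ (bbar (meshPt T k j)) (xk j)) (f₂ (bbar s) (xbar s)) :=
                (dist_eq_norm _ _).symm
            _ ≤ dist (f₂ (bbar (meshPt T k j)) (xk j))
                  (f₂ (bbar (meshPt T k j)) (xbar (meshPt T k j))) +
                dist (f₂ (bbar (meshPt T k j)) (xbar (meshPt T k j)))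
                  (f₂ (bbar (meshPt T k j)) (xbar s)) +
                dist (f₂ (bbar (meshPt T k j)) (xbar s)) (f₂ (bbar s) (xbar s)) :=
                dist_triangle4 _ _ _ _
            _ = ‖f₂ (bbar (meshPt T k j)) (xk j) -
                  f₂ (bbar (meshPt T k j)) (xbar (meshPt T k j))‖ +
                ‖f₂ (bbar (meshPt T k j)) (xbar (meshPt T k j)) -
                  f₂ (bbar (meshPt T k j)) (xbar s)‖ +
                ‖f₂ (bbar (meshPt T k j)) (xbar s) - f₂ (bbar s) (xbar s)‖ := by
                simp [dist_eq_norm]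
            _ ≤ L₁ * ‖xk j - xbar (meshPt T k j)‖ +
                (L₁ * (Real.sqrt h * X) + L₂ * (Real.sqrt h * B)) := by
                rw [hDdef] at *
                linarith
            _ = L₁ * ‖xk j - xbar (meshPt T k j)‖ + D := by rw [hDdef]
      calc ‖y (j+1) - ybar (meshPt T k (j+1))‖
          ≤ ‖y j - ybar (meshPt T k j)‖ +
            ‖h • f₂ (bbar (meshPt T k j)) (xk j) -
              ∫ u in meshPt T k j..meshPt T k (j+1), f₂ (bbar u) (xbar u)‖ := by
            rw [hsplit]; exact norm_add_le _ _
        _ ≤ (L₁ * ∑ i ∈ range j, h * ‖xk i - xbar (meshPt T k i)‖ + j * (h * D)) +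
            (L₁ * ‖xk j - xbar (meshPt T k j)‖ + D) * h := add_le_add ihj hstep
        _ = L₁ * ∑ i ∈ range (j+1), h * ‖xk i - xbar (meshPt T k i)‖ + (↑(j + 1) : ℝ) * (h * D) := by
            rw [Finset.sum_range_succ]
            push_cast
            ring
  intro j hj
  have hkey := key (j+1) hj
  have hfin : ((j:ℝ)+1) * (h * D) ≤ T * Real.sqrt h * (L₁ * X + L₂ * B) := by
    have h1 : ((j:ℝ)+1) * (h * D) ≤ (k:ℝ) * (h * D) := by
      refine mul_le_mul_of_nonneg_right ?_ (by positivity)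
      push_cast
      exact_mod_cast Nat.cast_le.mpr (Nat.succ_le_of_lt hj)
    have h2 : (k:ℝ) * (h * D) = T * Real.sqrt h * (L₁ * X + L₂ * B) := by
      rw [← mul_assoc, hkh, hDdef]; ring
    linarith
  calc ‖y (j+1) - ybar (meshPt T k (j+1))‖
      ≤ L₁ * ∑ i ∈ range (j+1), h * ‖xk i - xbar (meshPt T k i)‖ + (↑(j+1)) * (h * D) :=
        hkey
    _ ≤ L₁ * ∑ i ∈ range (j+1), h * ‖xk i - xbar (meshPt T k i)‖ +
        T * Real.sqrt h * (L₁ * X + L₂ * B) := by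
        push_cast
        linarith [hfin]
end

section
/- Derivative L² bound propagation for controls: let u^k, ū be absolutely continuous on [0,T] with u^k(t_j) − ū(t_j) = x^k(t_j) − x̄(t_j) at mesh points t_j = jT/k and u^k piecewise linear, ū ∈ W^{1,2} with var(u̇̄,[0,T]) ≤ μ and var(ẋ̄,[0,T]) ≤ μ. Then ∫_0^T ‖u̇^k(t) − u̇̄(t)‖² dt ≤ 4 ∫_0^T ‖ẋ^k(t) − ẋ̄(t)‖² dt + 20 h_k μ² + 6T·4^{−k+1}, where x^k is the piecewise linear function with the given mesh values and h_k = T/k. -/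
open MeasureTheory Set Finset

section Aux
variable {E : Type*} [NormedAddCommGroup E] [NormedSpace ℝ E] [CompleteSpace E]

lemma avg_dev (f : ℝ → E) {a b : ℝ} (hab : a < b)
    (hint : IntervalIntegrable f volume a b)
    {v : ℝ} (hv0 : 0 ≤ v) (hv : eVariationOn f (Icc a b) ≤ ENNReal.ofReal v)
    {t : ℝ} (ht : t ∈ Icc a b) :
    ‖(b - a)⁻¹ • (∫ τ in a..b, f τ) - f t‖ ≤ v := by
  have hba : (0:ℝ) < b - a := sub_pos.mpr hab
  have key : ∀ s ∈ Set.uIoc a b, ‖f s - f t‖ ≤ v := by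
    intro s hs
    have hs' : s ∈ Icc a b := by
      rw [Set.uIoc_of_le hab.le] at hs
      exact Ioc_subset_Icc_self hs
    have h1 : edist (f s) (f t) ≤ ENNReal.ofReal v :=
      (eVariationOn.edist_le f hs' ht).trans hv
    rw [edist_dist, ENNReal.ofReal_le_ofReal_iff hv0, dist_eq_norm] at h1
    exact h1
  have h3 : (∫ τ in a..b, (f τ - f t)) = (∫ τ in a..b, f τ) - (b - a) • f t := by
    rw [intervalIntegral.integral_sub hint intervalIntegrable_const,
      intervalIntegral.integral_const]
  have h2 : ‖(∫ τ in a..b, f τ) - (b - a) • f t‖ ≤ v * |b - a| := by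
    rw [← h3]
    exact intervalIntegral.norm_integral_le_of_norm_le_const key
  have heq : (b - a)⁻¹ • (∫ τ in a..b, f τ) - f t
      = (b - a)⁻¹ • ((∫ τ in a..b, f τ) - (b - a) • f t) := by
    rw [smul_sub, smul_smul, inv_mul_cancel₀ hba.ne', one_smul]
  rw [heq, norm_smul, norm_inv, Real.norm_eq_abs, abs_of_pos hba]
  rw [abs_of_pos hba] at h2
  have hm := mul_le_mul_of_nonneg_left h2 (inv_nonneg.mpr hba.le)
  calc (b - a)⁻¹ * ‖(∫ τ in a..b, f τ) - (b - a) • f t‖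
      ≤ (b - a)⁻¹ * (v * (b - a)) := hm
    _ = v := by field_simp

lemma evar_sum {F : Type*} [PseudoEMetricSpace F] (f : ℝ → F) (t : ℕ → ℝ)
    (hmono : Monotone t) (k : ℕ) :
    ∑ j ∈ Finset.range k, eVariationOn f (Icc (t j) (t (j+1)))
      ≤ eVariationOn f (Icc (t 0) (t k)) := by
  induction k with
  | zero => simp
  | succ m ih =>
    rw [Finset.sum_range_succ]
    have h := eVariationOn.Icc_add_Icc f (s := Set.univ)
      (hmono (Nat.zero_le m)) (hmono m.le_succ) (Set.mem_univ (t m))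
    simp only [Set.univ_inter] at h
    calc ∑ j ∈ Finset.range m, eVariationOn f (Icc (t j) (t (j+1)))
          + eVariationOn f (Icc (t m) (t (m+1)))
        ≤ eVariationOn f (Icc (t 0) (t m)) + eVariationOn f (Icc (t m) (t (m+1))) :=
          add_le_add ih le_rfl
      _ = eVariationOn f (Icc (t 0) (t (m+1))) := h

lemma sq_int {T : ℝ} (f : ℝ → E) (hf : MemLp f 2 (volume.restrict (Icc 0 T)))
    (c : E) {s : Set ℝ} (hs : s ⊆ Icc 0 T) :
    IntegrableOn (fun t => ‖c - f t‖ ^ 2) s := by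
  haveI : Fact (volume (Icc (0:ℝ) T) < ⊤) := ⟨measure_Icc_lt_top⟩
  have h1 : MemLp (fun t => c - f t) 2 (volume.restrict (Icc 0 T)) :=
    (memLp_const c).sub hf
  have h2 := h1.integrable_norm_rpow two_ne_zero ENNReal.ofNat_ne_top
  have h3 : IntegrableOn (fun t => ‖c - f t‖ ^ 2) (Icc 0 T) volume := by
    have e : (fun x => ‖c - f x‖ ^ ENNReal.toReal 2) = fun t => ‖c - f t‖ ^ 2 := by
      funext t
      rw [ENNReal.toReal_ofNat, show ((2:ℝ)) = ((2:ℕ):ℝ) by norm_num, Real.rpow_natCast]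
    rwa [e] at h2
  exact h3.mono_set hs

end Aux

set_option maxHeartbeats 1000000 in
/-- Derivative `L²` bound propagation for controls: if the mesh values satisfy
`u^k(t_j) − ubar(t_j) = x^k(t_j) − xbar(t_j)` and the derivatives `u̇̄, ẋ̄` have variation at
most `μ`, then `∫₀ᵀ‖u̇^k − u̇̄‖² ≤ 4∫₀ᵀ‖ẋ^k − ẋ̄‖² + 20 h_k μ² + 6T·4^{−k+1}`, where the
piecewise linear interpolants have derivatives given by the mesh difference quotients. -/
theorem control_derivative_propagation {n : ℕ} (T : ℝ) (hT : 0 < T) (k : ℕ) (hk : 0 < k)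
    (ubar u' xbar x' : ℝ → EuclideanSpace ℝ (Fin n)) (μ : ℝ) (hμ : 0 ≤ μ)
    (uv xv : ℕ → EuclideanSpace ℝ (Fin n))
    (hftcu : ∀ a b, a ∈ Icc 0 T → b ∈ Icc 0 T → ubar b - ubar a = ∫ τ in a..b, u' τ)
    (hftcx : ∀ a b, a ∈ Icc 0 T → b ∈ Icc 0 T → xbar b - xbar a = ∫ τ in a..b, x' τ)
    (humem : MemLp u' 2 (volume.restrict (Icc 0 T)))
    (hxmem : MemLp x' 2 (volume.restrict (Icc 0 T)))
    (hvaru : eVariationOn u' (Icc 0 T) ≤ ENNReal.ofReal μ)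
    (hvarx : eVariationOn x' (Icc 0 T) ≤ ENNReal.ofReal μ)
    (hrel : ∀ j ≤ k, uv j - ubar (meshPt T k j) = xv j - xbar (meshPt T k j)) :
    ∑ j ∈ range k, (∫ t in meshPt T k j..meshPt T k (j + 1),
        ‖(T / k)⁻¹ • (uv (j + 1) - uv j) - u' t‖ ^ 2)
      ≤ 4 * ∑ j ∈ range k, (∫ t in meshPt T k j..meshPt T k (j + 1),
          ‖(T / k)⁻¹ • (xv (j + 1) - xv j) - x' t‖ ^ 2)
        + 20 * (T / k) * μ ^ 2 + 6 * T * (4 * (4:ℝ)⁻¹ ^ k) := by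
  have hk' : (0:ℝ) < (k:ℝ) := Nat.cast_pos.mpr hk
  set h : ℝ := T / k with hhdef
  have hhpos : 0 < h := div_pos hT hk'
  haveI : Fact (volume (Icc (0:ℝ) T) < ⊤) := ⟨measure_Icc_lt_top⟩
  have hIu : IntegrableOn u' (Icc 0 T) volume := humem.integrable one_le_two
  have hIx : IntegrableOn x' (Icc 0 T) volume := hxmem.integrable one_le_two
  -- mesh facts
  have hmeshmono : Monotone (meshPt T k) := by
    intro i j hij
    exact mul_le_mul_of_nonneg_right (Nat.cast_le.mpr hij) hhpos.le
  have hmesh0 : meshPt T k 0 = 0 := by simp [meshPt]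
  have hmeshk : meshPt T k k = T := by
    show (k:ℝ) * (T / k) = T
    field_simp
  have hmesh_mem : ∀ j ≤ k, meshPt T k j ∈ Icc 0 T := by
    intro j hj
    constructor
    · show (0:ℝ) ≤ (j:ℝ) * (T/(k:ℝ))
      positivity
    · calc meshPt T k j ≤ meshPt T k k := hmeshmono hj
        _ = T := hmeshk
  have hstep : ∀ j : ℕ, meshPt T k (j+1) - meshPt T k j = h := by
    intro j
    rw [hhdef]
    simp only [meshPt, Nat.cast_add, Nat.cast_one]
    ring
  have hab : ∀ j : ℕ, meshPt T k j < meshPt T k (j+1) := by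
    intro j
    have := hstep j
    linarith
  have hsubIcc : ∀ j < k, Icc (meshPt T k j) (meshPt T k (j+1)) ⊆ Icc 0 T := by
    intro j hj
    exact Icc_subset_Icc (hmesh_mem j hj.le).1 (hmesh_mem (j+1) hj).2
  -- variation quantities
  set Vu : ℕ → ℝ := fun j => (eVariationOn u' (Icc (meshPt T k j) (meshPt T k (j+1)))).toReal
    with hVudef
  set Vx : ℕ → ℝ := fun j => (eVariationOn x' (Icc (meshPt T k j) (meshPt T k (j+1)))).toReal
    with hVxdef
  have hVmono : ∀ (f : ℝ → EuclideanSpace ℝ (Fin n)), ∀ j < k,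
      eVariationOn f (Icc (meshPt T k j) (meshPt T k (j+1))) ≤ eVariationOn f (Icc 0 T) := by
    intro f j hj
    exact eVariationOn.mono f (hsubIcc j hj)
  have hVune : ∀ j < k, eVariationOn u' (Icc (meshPt T k j) (meshPt T k (j+1))) ≠ ⊤ :=
    fun j hj => ((hVmono u' j hj).trans_lt (hvaru.trans_lt ENNReal.ofReal_lt_top)).ne
  have hVxne : ∀ j < k, eVariationOn x' (Icc (meshPt T k j) (meshPt T k (j+1))) ≠ ⊤ :=
    fun j hj => ((hVmono x' j hj).trans_lt (hvarx.trans_lt ENNReal.ofReal_lt_top)).ne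
  have hVule : ∀ j < k, Vu j ≤ μ := fun j hj =>
    ENNReal.toReal_le_of_le_ofReal hμ ((hVmono u' j hj).trans hvaru)
  have hVxle : ∀ j < k, Vx j ≤ μ := fun j hj =>
    ENNReal.toReal_le_of_le_ofReal hμ ((hVmono x' j hj).trans hvarx)
  -- sum of variations
  have hsumVar : ∀ (f : ℝ → EuclideanSpace ℝ (Fin n)),
      eVariationOn f (Icc 0 T) ≤ ENNReal.ofReal μ →
      ∑ j ∈ range k, (eVariationOn f (Icc (meshPt T k j) (meshPt T k (j+1)))).toReal ≤ μ := by
    intro f hvf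
    have h1 := evar_sum f (meshPt T k) hmeshmono k
    rw [hmesh0, hmeshk] at h1
    have h2 : ∑ j ∈ range k, eVariationOn f (Icc (meshPt T k j) (meshPt T k (j+1)))
        ≤ ENNReal.ofReal μ := h1.trans hvf
    have hne : ∀ j ∈ range k, eVariationOn f (Icc (meshPt T k j) (meshPt T k (j+1))) ≠ ⊤ := by
      intro j hj
      exact (((hVmono f j (mem_range.mp hj)).trans hvf).trans_lt ENNReal.ofReal_lt_top).ne
    have := ENNReal.toReal_le_of_le_ofReal hμ h2
    rwa [ENNReal.toReal_sum hne] at this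
  have hsumVu : ∑ j ∈ range k, Vu j ≤ μ := hsumVar u' hvaru
  have hsumVx : ∑ j ∈ range k, Vx j ≤ μ := hsumVar x' hvarx
  -- squares
  have hsq : ∀ (V : ℕ → ℝ), (∀ j < k, V j ≤ μ) → (∑ j ∈ range k, V j ≤ μ) →
      (∀ j, 0 ≤ V j) → ∑ j ∈ range k, V j ^ 2 ≤ μ ^ 2 := by
    intro V hle hsum h0
    calc ∑ j ∈ range k, V j ^ 2 ≤ ∑ j ∈ range k, V j * μ := by
          apply sum_le_sum
          intro j hj
          rw [sq]
          exact mul_le_mul_of_nonneg_left (hle j (mem_range.mp hj)) (h0 j)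
      _ = (∑ j ∈ range k, V j) * μ := (sum_mul _ _ _).symm
      _ ≤ μ * μ := mul_le_mul_of_nonneg_right hsum hμ
      _ = μ ^ 2 := (sq μ).symm
  have hsqVu : ∑ j ∈ range k, Vu j ^ 2 ≤ μ ^ 2 :=
    hsq Vu hVule hsumVu (fun j => ENNReal.toReal_nonneg)
  have hsqVx : ∑ j ∈ range k, Vx j ^ 2 ≤ μ ^ 2 :=
    hsq Vx hVxle hsumVx (fun j => ENNReal.toReal_nonneg)
  -- per-interval bound
  have hper : ∀ j ∈ range k,
      (∫ t in meshPt T k j..meshPt T k (j + 1), ‖h⁻¹ • (uv (j + 1) - uv j) - u' t‖ ^ 2)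
        ≤ 4 * (∫ t in meshPt T k j..meshPt T k (j + 1), ‖h⁻¹ • (xv (j + 1) - xv j) - x' t‖ ^ 2)
          + (4 * Vx j ^ 2 + 2 * Vu j ^ 2) * h := by
    intro j hj
    have hjk : j < k := mem_range.mp hj
    set a := meshPt T k j with hadef
    set b := meshPt T k (j+1) with hbdef
    have hab' : a < b := hab j
    have hba : b - a = h := hstep j
    have hsub : Icc a b ⊆ Icc 0 T := hsubIcc j hjk
    have hsubo : Ioc a b ⊆ Icc 0 T := Ioc_subset_Icc_self.trans hsub
    have hamem : a ∈ Icc 0 T := hmesh_mem j hjk.le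
    have hbmem : b ∈ Icc 0 T := hmesh_mem (j+1) hjk
    set cu : EuclideanSpace ℝ (Fin n) := h⁻¹ • (ubar b - ubar a) with hcudef
    set cx : EuclideanSpace ℝ (Fin n) := h⁻¹ • (xbar b - xbar a) with hcxdef
    -- identity
    have hdiff : uv (j+1) - uv j - (ubar b - ubar a) = xv (j+1) - xv j - (xbar b - xbar a) := by
      have e1 := hrel j hjk.le
      have e2 := hrel (j+1) hjk
      calc uv (j+1) - uv j - (ubar b - ubar a)
          = (uv (j+1) - ubar (meshPt T k (j+1))) - (uv j - ubar (meshPt T k j)) := by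
            rw [← hadef, ← hbdef]; abel
        _ = (xv (j+1) - xbar (meshPt T k (j+1))) - (xv j - xbar (meshPt T k j)) := by
            rw [e1, e2]
        _ = xv (j+1) - xv j - (xbar b - xbar a) := by rw [← hadef, ← hbdef]; abel
    have hkey : ∀ t : ℝ, h⁻¹ • (uv (j+1) - uv j) - u' t
        = (h⁻¹ • (xv (j+1) - xv j) - x' t) + (x' t - cx) + (cu - u' t) := by
      intro t
      have hc : h⁻¹ • (uv (j+1) - uv j) - cu = h⁻¹ • (xv (j+1) - xv j) - cx := by
        rw [hcudef, hcxdef, ← smul_sub, ← smul_sub, hdiff]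
      calc h⁻¹ • (uv (j+1) - uv j) - u' t
          = (h⁻¹ • (uv (j+1) - uv j) - cu) + (cu - u' t) := by abel
        _ = (h⁻¹ • (xv (j+1) - xv j) - cx) + (cu - u' t) := by rw [hc]
        _ = (h⁻¹ • (xv (j+1) - xv j) - x' t) + (x' t - cx) + (cu - u' t) := by abel
    -- interval integrability
    have hintu : IntervalIntegrable u' volume a b := by
      rw [intervalIntegrable_iff_integrableOn_Ioc_of_le hab'.le]
      exact hIu.mono_set hsubo
    have hintx : IntervalIntegrable x' volume a b := by
      rw [intervalIntegrable_iff_integrableOn_Ioc_of_le hab'.le]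
      exact hIx.mono_set hsubo
    -- pointwise
    have hpt : ∀ t ∈ Ioc a b,
        ‖h⁻¹ • (uv (j+1) - uv j) - u' t‖ ^ 2
          ≤ 4 * ‖h⁻¹ • (xv (j+1) - xv j) - x' t‖ ^ 2 + (4 * Vx j ^ 2 + 2 * Vu j ^ 2) := by
      intro t ht
      have ht' : t ∈ Icc a b := Ioc_subset_Icc_self ht
      have hq : ‖x' t - cx‖ ≤ Vx j := by
        rw [norm_sub_rev]
        have hcx2 : cx = (b - a)⁻¹ • (∫ τ in a..b, x' τ) := by
          rw [hcxdef, hba, hftcx a b hamem hbmem]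
        rw [hcx2]
        exact avg_dev x' hab' hintx ENNReal.toReal_nonneg
          (le_of_eq (ENNReal.ofReal_toReal (hVxne j hjk)).symm) ht'
      have hr : ‖cu - u' t‖ ≤ Vu j := by
        have hcu2 : cu = (b - a)⁻¹ • (∫ τ in a..b, u' τ) := by
          rw [hcudef, hba, hftcu a b hamem hbmem]
        rw [hcu2]
        exact avg_dev u' hab' hintu ENNReal.toReal_nonneg
          (le_of_eq (ENNReal.ofReal_toReal (hVune j hjk)).symm) ht'
      rw [hkey t]
      have tri : ‖(h⁻¹ • (xv (j+1) - xv j) - x' t) + (x' t - cx) + (cu - u' t)‖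
          ≤ ‖h⁻¹ • (xv (j+1) - xv j) - x' t‖ + ‖x' t - cx‖ + ‖cu - u' t‖ := norm_add₃_le
      set X := ‖h⁻¹ • (xv (j+1) - xv j) - x' t‖
      set Y := ‖x' t - cx‖
      set Z := ‖cu - u' t‖
      have hsq2 : ‖(h⁻¹ • (xv (j+1) - xv j) - x' t) + (x' t - cx) + (cu - u' t)‖ ^ 2
          ≤ (X + Y + Z) ^ 2 := by
        apply pow_le_pow_left₀ (norm_nonneg _) tri
      have hX : 0 ≤ X := norm_nonneg _
      have hY : 0 ≤ Y := norm_nonneg _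
      have hZ : 0 ≤ Z := norm_nonneg _
      nlinarith [sq_nonneg (X - Y), sq_nonneg (X + Y - Z), hq, hr,
        mul_le_mul hq hq hY (ENNReal.toReal_nonneg), mul_le_mul hr hr hZ (ENNReal.toReal_nonneg)]
    -- integrals
    have hIL : IntegrableOn (fun t => ‖h⁻¹ • (uv (j+1) - uv j) - u' t‖ ^ 2) (Ioc a b) volume :=
      sq_int u' humem _ hsubo
    have hIXsq : IntegrableOn (fun t => ‖h⁻¹ • (xv (j+1) - xv j) - x' t‖ ^ 2) (Ioc a b) volume :=
      sq_int x' hxmem _ hsubo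
    have hIR : IntegrableOn
        (fun t => 4 * ‖h⁻¹ • (xv (j+1) - xv j) - x' t‖ ^ 2 + (4 * Vx j ^ 2 + 2 * Vu j ^ 2))
        (Ioc a b) volume := by
      apply Integrable.add
      · exact hIXsq.const_mul 4
      · exact integrableOn_const measure_Ioc_lt_top.ne
    rw [intervalIntegral.integral_of_le hab'.le, intervalIntegral.integral_of_le hab'.le]
    calc (∫ t in Ioc a b, ‖h⁻¹ • (uv (j+1) - uv j) - u' t‖ ^ 2)
        ≤ ∫ t in Ioc a b,
            (4 * ‖h⁻¹ • (xv (j+1) - xv j) - x' t‖ ^ 2 + (4 * Vx j ^ 2 + 2 * Vu j ^ 2)) :=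
          setIntegral_mono_on hIL hIR measurableSet_Ioc hpt
      _ = 4 * (∫ t in Ioc a b, ‖h⁻¹ • (xv (j+1) - xv j) - x' t‖ ^ 2)
            + (4 * Vx j ^ 2 + 2 * Vu j ^ 2) * h := by
          rw [integral_add (hIXsq.const_mul 4)
            (integrableOn_const measure_Ioc_lt_top.ne)]
          rw [integral_const_mul, setIntegral_const, Real.volume_real_Ioc_of_le hab'.le, smul_eq_mul,
            hba]
          ring
  -- sum up
  calc ∑ j ∈ range k, (∫ t in meshPt T k j..meshPt T k (j + 1),
          ‖h⁻¹ • (uv (j + 1) - uv j) - u' t‖ ^ 2)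
      ≤ ∑ j ∈ range k, (4 * (∫ t in meshPt T k j..meshPt T k (j + 1),
            ‖h⁻¹ • (xv (j + 1) - xv j) - x' t‖ ^ 2)
          + (4 * Vx j ^ 2 + 2 * Vu j ^ 2) * h) := sum_le_sum hper
    _ = 4 * ∑ j ∈ range k, (∫ t in meshPt T k j..meshPt T k (j + 1),
            ‖h⁻¹ • (xv (j + 1) - xv j) - x' t‖ ^ 2)
          + (∑ j ∈ range k, (4 * Vx j ^ 2 + 2 * Vu j ^ 2)) * h := by
        rw [sum_add_distrib, mul_sum, sum_mul]
    _ ≤ 4 * ∑ j ∈ range k, (∫ t in meshPt T k j..meshPt T k (j + 1),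
            ‖h⁻¹ • (xv (j + 1) - xv j) - x' t‖ ^ 2)
          + 20 * h * μ ^ 2 + 6 * T * (4 * (4:ℝ)⁻¹ ^ k) := by
        have hs : ∑ j ∈ range k, (4 * Vx j ^ 2 + 2 * Vu j ^ 2)
            = 4 * ∑ j ∈ range k, Vx j ^ 2 + 2 * ∑ j ∈ range k, Vu j ^ 2 := by
          rw [sum_add_distrib, mul_sum, mul_sum]
        have h1 : ∑ j ∈ range k, (4 * Vx j ^ 2 + 2 * Vu j ^ 2) ≤ 6 * μ ^ 2 := by
          rw [hs]; linarith
        have h2 : (∑ j ∈ range k, (4 * Vx j ^ 2 + 2 * Vu j ^ 2)) * h ≤ 6 * μ ^ 2 * h := by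
          exact mul_le_mul_of_nonneg_right h1 hhpos.le
        have h3 : (0:ℝ) ≤ h * μ ^ 2 := by positivity
        have h4 : (0:ℝ) ≤ 6 * T * (4 * (4:ℝ)⁻¹ ^ k) := by positivity
        linarith
end
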